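/- arXiv:2303.01135 — 5 statements merged into one kernel-verified Lean document; each statement's English description precedes it below -/
import Mathlib

section
/- Let F : ℝ^d → ℝ be convex, nonnegative, differentiable and β-smooth, and consider gradient descent w_{t+1} = w_t − η∇F(w_t) with w_1 = 0 and step size η ≤ 1/β. If w* satisfies F(w*) ≤ ε, then for every T, ‖w_T − w*‖² ≤ ‖w*‖² + 2ηεT, and hence ‖w_T‖ ≤ 2‖w*‖ + 2√(ηεT). -/
open Real Filter Topology

local notation "⟪" x ", " y "⟫" => @inner ℝ _ _ x y

lemma gd_line_deriv {d : ℕ} (F : EuclideanSpace ℝ (Fin d) → ℝ)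
    (g : EuclideanSpace ℝ (Fin d) → EuclideanSpace ℝ (Fin d))
    (hgrad : ∀ w, HasGradientAt F (g w) w)
    (x v : EuclideanSpace ℝ (Fin d)) (t : ℝ) :
    HasDerivAt (fun s : ℝ => F (x + s • v)) ⟪g (x + t • v), v⟫ t := by
  have hline : HasDerivAt (fun s : ℝ => x + s • v) v t := by
    simpa using ((hasDerivAt_id t).smul_const v).const_add x
  have h := (hgrad (x + t • v)).hasFDerivAt.comp_hasDerivAt t hline
  simp at h
  exact h

lemma gd_convex_ineq {d : ℕ} (F : EuclideanSpace ℝ (Fin d) → ℝ)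
    (g : EuclideanSpace ℝ (Fin d) → EuclideanSpace ℝ (Fin d))
    (hconv : ConvexOn ℝ Set.univ F)
    (hgrad : ∀ w, HasGradientAt F (g w) w)
    (x y : EuclideanSpace ℝ (Fin d)) :
    F x + ⟪g x, y - x⟫ ≤ F y := by
  set v := y - x with hv
  have hd : HasDerivAt (fun s : ℝ => F (x + s • v)) ⟪g x, v⟫ 0 := by
    have := gd_line_deriv F g hgrad x v 0
    simpa using this
  have hslope := hasDerivAt_iff_tendsto_slope.1 hd
  have hslope' : Tendsto (slope (fun s : ℝ => F (x + s • v)) 0) (𝓝[>] 0) (𝓝 ⟪g x, v⟫) :=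
    hslope.mono_left (nhdsWithin_mono 0 (by intro z hz; exact ne_of_gt hz))
  have hle : ⟪g x, v⟫ ≤ F y - F x := by
    refine le_of_tendsto hslope' ?_
    filter_upwards [Ioc_mem_nhdsGT_of_mem (Set.mem_Ico.2 ⟨le_refl (0:ℝ), one_pos⟩)] with t ht
    have ht0 : 0 < t := ht.1
    have ht1 : t ≤ 1 := ht.2
    have hcx : F (x + t • v) ≤ (1 - t) * F x + t * F y := by
      have := hconv.2 (Set.mem_univ x) (Set.mem_univ y) (by linarith : (0:ℝ) ≤ 1 - t)
        (le_of_lt ht0) (by ring)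
      have hpt : (1 - t) • x + t • y = x + t • v := by
        rw [hv]; module
      simpa [hpt, smul_eq_mul] using this
    rw [slope_def_field]
    have : (F (x + t • v) - F (x + (0:ℝ) • v)) / t ≤ F y - F x := by
      rw [div_le_iff₀ ht0]
      simp only [zero_smul, add_zero]
      nlinarith
    simpa [div_eq_inv_mul] using this
  linarith

lemma gd_grad_sq_le {d : ℕ} (F : EuclideanSpace ℝ (Fin d) → ℝ)
    (g : EuclideanSpace ℝ (Fin d) → EuclideanSpace ℝ (Fin d))
    (β : ℝ) (hβ : 0 < β)
    (hnonneg : ∀ w, 0 ≤ F w)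
    (hgrad : ∀ w, HasGradientAt F (g w) w)
    (hlip : ∀ u v, ‖g u - g v‖ ≤ β * ‖u - v‖)
    (x : EuclideanSpace ℝ (Fin d)) :
    ‖g x‖ ^ 2 ≤ 2 * β * F x := by
  -- descent lemma at y = x - (1/β) • g x
  set v : EuclideanSpace ℝ (Fin d) := -((1/β) • g x) with hvdef
  set χ : ℝ → ℝ := fun t => F (x + t • v) - t * ⟪g x, v⟫ - β * t ^ 2 / 2 * ‖v‖ ^ 2 with hχ
  have hχd : ∀ t : ℝ, HasDerivAt χ (⟪g (x + t • v), v⟫ - ⟪g x, v⟫ - β * t * ‖v‖ ^ 2) t := by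
    intro t
    have h1 := gd_line_deriv F g hgrad x v t
    have h2 : HasDerivAt (fun s : ℝ => s * ⟪g x, v⟫) ⟪g x, v⟫ t := by
      simpa using (hasDerivAt_id t).mul_const ⟪g x, v⟫
    have h3 : HasDerivAt (fun s : ℝ => β * s ^ 2 / 2 * ‖v‖ ^ 2) (β * t * ‖v‖ ^ 2) t := by
      have : HasDerivAt (fun s : ℝ => s ^ 2) (2 * t) t := by
        simpa using hasDerivAt_pow 2 t
      have := ((this.const_mul β).div_const 2).mul_const (‖v‖ ^ 2)
      rw [show β * t * ‖v‖ ^ 2 = β * (2 * t) / 2 * ‖v‖ ^ 2 by ring]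
      exact this
    have h4 := (h1.sub h2).sub h3
    exact h4
  have hmono : AntitoneOn χ (Set.Icc 0 1) := by
    apply antitoneOn_of_deriv_nonpos (convex_Icc 0 1)
    · exact Continuous.continuousOn (continuous_iff_continuousAt.2 fun t => (hχd t).continuousAt)
    · intro t ht
      exact (hχd t).differentiableAt.differentiableWithinAt
    · intro t ht
      rw [interior_Icc] at ht
      rw [(hχd t).deriv]
      have hineq : ⟪g (x + t • v) - g x, v⟫ ≤ β * t * ‖v‖ ^ 2 := by
        calc ⟪g (x + t • v) - g x, v⟫ ≤ ‖g (x + t • v) - g x‖ * ‖v‖ :=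
              real_inner_le_norm _ _
          _ ≤ (β * ‖x + t • v - x‖) * ‖v‖ := by
              apply mul_le_mul_of_nonneg_right (hlip _ _) (norm_nonneg _)
          _ = β * t * ‖v‖ ^ 2 := by
              rw [show x + t • v - x = t • v by abel, norm_smul, Real.norm_eq_abs, abs_of_pos ht.1]
              ring
      have := inner_sub_left (𝕜 := ℝ) (g (x + t • v)) (g x) v
      linarith [hineq, this.symm.le, this.le]
  have hχ10 : χ 1 ≤ χ 0 :=
    hmono (Set.mem_Icc.2 ⟨le_refl 0, zero_le_one⟩) (Set.mem_Icc.2 ⟨zero_le_one, le_refl 1⟩)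
      zero_le_one
  have hiv : ⟪g x, v⟫ = -(1/β) * ‖g x‖ ^ 2 := by
    rw [hvdef, inner_neg_right, real_inner_smul_right, real_inner_self_eq_norm_sq]
    ring
  have hnv : ‖v‖ ^ 2 = (1/β)^2 * ‖g x‖ ^ 2 := by
    rw [hvdef, norm_neg, norm_smul, Real.norm_eq_abs, abs_of_pos (by positivity : (0:ℝ) < 1/β)]
    ring
  have h0 : 0 ≤ F (x + (1:ℝ) • v) := hnonneg _
  have hχ1 : χ 1 = F (x + (1:ℝ) • v) + (1/β) * ‖g x‖ ^ 2 - β / 2 * ((1/β)^2 * ‖g x‖^2) := by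
    rw [hχ]; simp only; rw [hiv, hnv]; ring
  have hχ0 : χ 0 = F x := by simp [hχ]
  rw [hχ1, hχ0] at hχ10
  have hβ' : β ≠ 0 := ne_of_gt hβ
  have h2 : 2*β*(F (x+(1:ℝ)•v) + (1/β)*‖g x‖^2 - β/2*((1/β)^2*‖g x‖^2)) ≤ 2*β*F x :=
    mul_le_mul_of_nonneg_left hχ10 (by positivity)
  have heq : 2*β*(F (x+(1:ℝ)•v) + (1/β)*‖g x‖^2 - β/2*((1/β)^2*‖g x‖^2))
      = 2*β*F (x+(1:ℝ)•v) + ‖g x‖^2 := by field_simp; ring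
  rw [heq] at h2
  have := mul_nonneg (by positivity : (0:ℝ) ≤ 2*β) h0
  linarith

theorem gd_norm_bound {d : ℕ}
    (F : EuclideanSpace ℝ (Fin d) → ℝ)
    (g : EuclideanSpace ℝ (Fin d) → EuclideanSpace ℝ (Fin d))
    (β η ε : ℝ) (hβ : 0 < β) (hη : 0 < η) (hηβ : η ≤ 1 / β) (hε : 0 < ε)
    (hconv : ConvexOn ℝ Set.univ F)
    (hnonneg : ∀ w, 0 ≤ F w)
    (hgrad : ∀ w, HasGradientAt F (g w) w)
    (hlip : ∀ u v, ‖g u - g v‖ ≤ β * ‖u - v‖)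
    (w : ℕ → EuclideanSpace ℝ (Fin d))
    (hw1 : w 1 = 0)
    (hupd : ∀ t, 1 ≤ t → w (t + 1) = w t - η • g (w t))
    (wstar : EuclideanSpace ℝ (Fin d)) (hstar : F wstar ≤ ε) :
    ∀ T : ℕ, 1 ≤ T →
      ‖w T - wstar‖ ^ 2 ≤ ‖wstar‖ ^ 2 + 2 * η * ε * T ∧
      ‖w T‖ ≤ 2 * ‖wstar‖ + 2 * Real.sqrt (η * ε * T) := by
  have key : ∀ T : ℕ, 1 ≤ T → ‖w T - wstar‖ ^ 2 ≤ ‖wstar‖ ^ 2 + 2 * η * ε * (T - 1) := by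
    intro T hT
    induction T, hT using Nat.le_induction with
    | base => simp [hw1]
    | succ t ht ih =>
      have hstep : ‖w (t+1) - wstar‖ ^ 2 ≤ ‖w t - wstar‖ ^ 2 + 2 * η * ε := by
        rw [hupd t ht]
        have hexp : ‖w t - η • g (w t) - wstar‖ ^ 2
            = ‖w t - wstar‖ ^ 2 - 2 * (η * ⟪g (w t), w t - wstar⟫) + η^2 * ‖g (w t)‖ ^ 2 := by
          have := norm_sub_sq_real (w t - wstar) (η • g (w t))
          rw [show w t - η • g (w t) - wstar = (w t - wstar) - η • g (w t) by abel]
          rw [this, real_inner_smul_right, norm_smul]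
          rw [real_inner_comm]
          simp [abs_of_pos hη]
          ring
        rw [hexp]
        have h1 : F (w t) - F wstar ≤ ⟪g (w t), w t - wstar⟫ := by
          have := gd_convex_ineq F g hconv hgrad (w t) wstar
          have hsplit : ⟪g (w t), wstar - w t⟫ = -⟪g (w t), w t - wstar⟫ := by
            rw [← inner_neg_right]; congr 1; abel
          rw [hsplit] at this
          linarith
        have h2 : ‖g (w t)‖ ^ 2 ≤ 2 * β * F (w t) :=
          gd_grad_sq_le F g β hβ hnonneg hgrad hlip (w t)
        have hFt : 0 ≤ F (w t) := hnonneg _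
        have hFs : F wstar ≤ ε := hstar
        have hηβ' : η * β ≤ 1 := (le_div_iff₀ hβ).1 hηβ
        nlinarith [mul_le_mul_of_nonneg_left h2 (le_of_lt (mul_pos hη hη)),
          sq_nonneg η, mul_nonneg (le_of_lt hη) hFt]
      have : ((t+1 : ℕ) : ℝ) - 1 = ((t:ℕ):ℝ) - 1 + 1 := by push_cast; ring
      rw [this]
      calc ‖w (t+1) - wstar‖ ^ 2 ≤ ‖w t - wstar‖ ^ 2 + 2 * η * ε := hstep
        _ ≤ ‖wstar‖ ^ 2 + 2 * η * ε * (((t:ℕ):ℝ) - 1) + 2 * η * ε := by linarith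
        _ = ‖wstar‖ ^ 2 + 2 * η * ε * (((t:ℕ):ℝ) - 1 + 1) := by ring
  intro T hT
  have hT1 : (1:ℝ) ≤ (T:ℝ) := by exact_mod_cast hT
  have h1 : ‖w T - wstar‖ ^ 2 ≤ ‖wstar‖ ^ 2 + 2 * η * ε * T := by
    have := key T hT
    have hpos : 0 ≤ 2 * η * ε := by positivity
    nlinarith
  refine ⟨h1, ?_⟩
  set s := Real.sqrt (η * ε * T) with hs
  have hs0 : 0 ≤ s := Real.sqrt_nonneg _
  have hs2 : s ^ 2 = η * ε * T := Real.sq_sqrt (by positivity)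
  have htri : ‖w T‖ ≤ ‖wstar‖ + ‖w T - wstar‖ := by
    calc ‖w T‖ = ‖wstar + (w T - wstar)‖ := by congr 1; abel
      _ ≤ ‖wstar‖ + ‖w T - wstar‖ := norm_add_le _ _
  have hn : ‖w T - wstar‖ ≤ ‖wstar‖ + 2 * s := by
    nlinarith [norm_nonneg (w T - wstar), norm_nonneg wstar, hs0, hs2, h1,
      mul_nonneg (norm_nonneg wstar) hs0]
  linarith
end

section
/- Let F : ℝ^d → ℝ be convex, nonnegative, differentiable and β-smooth, and run gradient descent w_{t+1} = w_t − η∇F(w_t) with w_1 = 0 and η ≤ 1/(2β). If F(w*) ≤ ε, then F(w_T) ≤ ‖w*‖²/(ηT) + 2ε. -/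
open RealInnerProductSpace Set

variable {d : ℕ} {F : EuclideanSpace ℝ (Fin d) → ℝ}
  {g : EuclideanSpace ℝ (Fin d) → EuclideanSpace ℝ (Fin d)}

private lemma lineDeriv_aux (hgrad : ∀ w, HasGradientAt F (g w) w)
    (v h : EuclideanSpace ℝ (Fin d)) (t : ℝ) :
    HasDerivAt (fun s : ℝ => F (v + s • h)) ⟪g (v + t • h), h⟫ t := by
  have hF : HasFDerivAt F ((InnerProductSpace.toDual ℝ _) (g (v + t • h))) (v + t • h) :=
    (hasGradientAt_iff_hasFDerivAt).mp (hgrad _)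
  have hline : HasDerivAt (fun s : ℝ => v + s • h) h t := by
    simpa using ((hasDerivAt_id t).smul_const h).const_add v
  have := hF.comp_hasDerivAt t hline
  simpa [InnerProductSpace.toDual_apply_apply, Function.comp_def] using this

private lemma grad_convex_ineq (hconv : ConvexOn ℝ Set.univ F)
    (hgrad : ∀ w, HasGradientAt F (g w) w) (u v : EuclideanSpace ℝ (Fin d)) :
    F v + ⟪g v, u - v⟫ ≤ F u := by
  have hconvφ : ConvexOn ℝ Set.univ (fun s : ℝ => F (v + s • (u - v))) := by
    have := hconv.comp_affineMap (AffineMap.lineMap v u)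
    simpa [Function.comp_def, AffineMap.lineMap_apply_module', add_comm] using this
  have hd : HasDerivAt (fun s : ℝ => F (v + s • (u - v))) ⟪g v, u - v⟫ 0 := by
    simpa using lineDeriv_aux hgrad v (u - v) 0
  have hs := hconvφ.le_slope_of_hasDerivAt (Set.mem_univ 0) (Set.mem_univ (1:ℝ)) one_pos hd
  rw [slope_def_field] at hs
  simp only [one_smul, zero_smul, add_zero, add_sub_cancel] at hs
  have : (F u - F v) / (1 - 0) = F u - F v := by ring
  linarith [hs.trans_eq this]

private lemma smooth_ub {β : ℝ} (hβ : 0 < β)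
    (hgrad : ∀ w, HasGradientAt F (g w) w)
    (hlip : ∀ u v, ‖g u - g v‖ ≤ β * ‖u - v‖) (u v : EuclideanSpace ℝ (Fin d)) :
    F u ≤ F v + ⟪g v, u - v⟫ + β / 2 * ‖u - v‖ ^ 2 := by
  set h := u - v with hh
  set χ : ℝ → ℝ := fun t => F (v + t • h) - ⟪g v, h⟫ * t - β / 2 * ‖h‖ ^ 2 * t ^ 2 with hχ
  have hχd : ∀ t : ℝ, HasDerivAt χ (⟪g (v + t • h), h⟫ - ⟪g v, h⟫ - β * ‖h‖ ^ 2 * t) t := by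
    intro t
    have h1 := lineDeriv_aux hgrad v h t
    have h2 : HasDerivAt (fun t : ℝ => ⟪g v, h⟫ * t) ⟪g v, h⟫ t := by
      simpa using (hasDerivAt_id t).const_mul ⟪g v, h⟫
    have h3 : HasDerivAt (fun t : ℝ => β / 2 * ‖h‖ ^ 2 * t ^ 2) (β / 2 * ‖h‖ ^ 2 * (2 * t)) t := by
      simpa using (hasDerivAt_pow 2 t).const_mul (β / 2 * ‖h‖ ^ 2)
    have := (h1.sub h2).sub h3
    convert this using 1
    · rfl
    · rfl
    · rfl
    · ring
  have hanti : AntitoneOn χ (Set.Icc (0:ℝ) 1) := by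
    apply antitoneOn_of_deriv_nonpos (convex_Icc 0 1)
    · exact fun t _ => (hχd t).continuousAt.continuousWithinAt
    · exact fun t _ => (hχd t).differentiableAt.differentiableWithinAt
    · intro t ht
      rw [interior_Icc] at ht
      rw [(hχd t).deriv]
      have hcs : ⟪g (v + t • h) - g v, h⟫ ≤ ‖g (v + t • h) - g v‖ * ‖h‖ :=
        real_inner_le_norm _ _
      have hl : ‖g (v + t • h) - g v‖ ≤ β * ‖t • h‖ := by
        simpa using hlip (v + t • h) v
      have hn : ‖t • h‖ = t * ‖h‖ := by
        rw [norm_smul, Real.norm_eq_abs, abs_of_pos ht.1]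
      rw [inner_sub_left] at hcs
      nlinarith [norm_nonneg h, mul_le_mul_of_nonneg_right (hl.trans_eq (by rw [hn]; try ring)) (norm_nonneg h)]
  have hle := hanti (Set.left_mem_Icc.mpr zero_le_one) (Set.right_mem_Icc.mpr zero_le_one) zero_le_one
  simp only [hχ] at hle
  simp only [one_smul, zero_smul, add_zero, mul_one, mul_zero, one_pow, sub_zero] at hle
  have hvh : v + h = u := by rw [hh]; abel
  rw [hvh] at hle
  linarith

private lemma grad_sq_le {β : ℝ} (hβ : 0 < β)
    (hnonneg : ∀ w, 0 ≤ F w)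
    (hgrad : ∀ w, HasGradientAt F (g w) w)
    (hlip : ∀ u v, ‖g u - g v‖ ≤ β * ‖u - v‖) (x : EuclideanSpace ℝ (Fin d)) :
    ‖g x‖ ^ 2 ≤ 2 * β * F x := by
  have hs := smooth_ub hβ hgrad hlip (x - (1 / β) • g x) x
  have h1 : x - (1 / β) • g x - x = -((1 / β) • g x) := by abel
  rw [h1] at hs
  rw [inner_neg_right, real_inner_smul_right, real_inner_self_eq_norm_sq] at hs
  rw [norm_neg, norm_smul, Real.norm_eq_abs, abs_of_pos (by positivity : (0:ℝ) < 1 / β)] at hs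
  have h0 := hnonneg (x - (1 / β) • g x)
  have e1 : β / 2 * (1 / β * ‖g x‖) ^ 2 = ‖g x‖ ^ 2 / (2 * β) := by
    field_simp
  have e2 : 1 / β * ‖g x‖ ^ 2 = 2 * (‖g x‖ ^ 2 / (2 * β)) := by
    field_simp
  rw [e1, e2] at hs
  have key : ‖g x‖ ^ 2 / (2 * β) ≤ F x := by linarith
  rw [div_le_iff₀ (by positivity)] at key
  linarith

set_option maxHeartbeats 1600000 in
theorem gd_optimization_error {d : ℕ}
    (F : EuclideanSpace ℝ (Fin d) → ℝ)
    (g : EuclideanSpace ℝ (Fin d) → EuclideanSpace ℝ (Fin d))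
    (β η ε : ℝ) (hβ : 0 < β) (hη : 0 < η) (hηβ : η ≤ 1 / (2 * β)) (hε : 0 < ε)
    (hconv : ConvexOn ℝ Set.univ F)
    (hnonneg : ∀ w, 0 ≤ F w)
    (hgrad : ∀ w, HasGradientAt F (g w) w)
    (hlip : ∀ u v, ‖g u - g v‖ ≤ β * ‖u - v‖)
    (w : ℕ → EuclideanSpace ℝ (Fin d))
    (hw1 : w 1 = 0)
    (hupd : ∀ t, 1 ≤ t → w (t + 1) = w t - η • g (w t))
    (wstar : EuclideanSpace ℝ (Fin d)) (hstar : F wstar ≤ ε) :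
    ∀ T : ℕ, 1 ≤ T → F (w T) ≤ ‖wstar‖ ^ 2 / (η * T) + 2 * ε := by
  have hβη : β * η ≤ 1 / 2 := by
    have := (le_div_iff₀ (by positivity : (0:ℝ) < 2 * β)).mp hηβ
    nlinarith
  -- descent: one-step function value bound
  have hdesc : ∀ t, 1 ≤ t →
      F (w (t + 1)) ≤ F (w t) - η * ‖g (w t)‖ ^ 2 + β / 2 * η ^ 2 * ‖g (w t)‖ ^ 2 := by
    intro t ht
    have hs := smooth_ub hβ hgrad hlip (w (t + 1)) (w t)
    rw [hupd t ht] at hs ⊢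
    have h1 : w t - η • g (w t) - w t = -(η • g (w t)) := by abel
    rw [h1, inner_neg_right, real_inner_smul_right, real_inner_self_eq_norm_sq,
      norm_neg, norm_smul, Real.norm_eq_abs, abs_of_pos hη] at hs
    nlinarith [hs]
  have hmono : ∀ t, 1 ≤ t → F (w (t + 1)) ≤ F (w t) := by
    intro t ht
    have := hdesc t ht
    nlinarith [sq_nonneg ‖g (w t)‖, mul_nonneg hη.le (sq_nonneg ‖g (w t)‖)]
  -- one-step distance bound
  have hkey : ∀ t, 1 ≤ t →
      ‖w (t + 1) - wstar‖ ^ 2 + 2 * η * F (w (t + 1)) ≤ ‖w t - wstar‖ ^ 2 + 2 * η * ε := by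
    intro t ht
    have hc := grad_convex_ineq hconv hgrad wstar (w t)
    have hd := hdesc t ht
    have hexp : ‖w (t + 1) - wstar‖ ^ 2 = ‖w t - wstar‖ ^ 2
        - 2 * (η * ⟪w t - wstar, g (w t)⟫) + η ^ 2 * ‖g (w t)‖ ^ 2 := by
      rw [hupd t ht]
      have h1 : w t - η • g (w t) - wstar = (w t - wstar) - η • g (w t) := by abel
      rw [h1, norm_sub_sq_real, real_inner_smul_right, norm_smul, Real.norm_eq_abs,
        abs_of_pos hη, mul_pow]
    have hc' : F (w t) - ε ≤ ⟪w t - wstar, g (w t)⟫ := by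
      have h2 : ⟪g (w t), wstar - w t⟫ = -⟪w t - wstar, g (w t)⟫ := by
        rw [real_inner_comm]
        rw [show wstar - w t = -(w t - wstar) by abel, inner_neg_left]
      rw [h2] at hc
      linarith
    rw [hexp]
    nlinarith [mul_le_mul_of_nonneg_left hc' (by positivity : (0:ℝ) ≤ 2 * η),
      mul_le_mul_of_nonneg_left hd (by positivity : (0:ℝ) ≤ 2 * η),
      mul_nonneg (mul_nonneg hη.le hη.le) (sq_nonneg ‖g (w t)‖),
      mul_le_mul_of_nonneg_right hβη (mul_nonneg (mul_nonneg hη.le hη.le) (sq_nonneg ‖g (w t)‖))]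
  -- main induction
  have hmain : ∀ T, 1 ≤ T → ‖w T - wstar‖ ^ 2 + 2 * η * ((T : ℝ) - 1) * F (w T)
      ≤ ‖wstar‖ ^ 2 + 2 * η * ((T : ℝ) - 1) * ε := by
    intro T hT
    induction T, hT using Nat.le_induction with
    | base => simp [hw1]
    | succ t ht ih =>
      have hk := hkey t ht
      have hm := hmono t ht
      have htR : (1:ℝ) ≤ (t : ℝ) := by exact_mod_cast ht
      push_cast
      have hcoef : (0:ℝ) ≤ 2 * η * ((t : ℝ) - 1) := by
        have : (0:ℝ) ≤ (t:ℝ) - 1 := by linarith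
        positivity
      push_cast at ih
      nlinarith [mul_le_mul_of_nonneg_left hm hcoef]
  intro T hT
  rcases eq_or_lt_of_le hT with h1 | h2
  · -- T = 1
    rw [← h1, hw1]
    have hs := smooth_ub hβ hgrad hlip 0 wstar
    have hsq := grad_sq_le hβ hnonneg hgrad hlip wstar
    have hgε : ‖g wstar‖ ^ 2 ≤ 2 * β * ε := by nlinarith
    have hcs : ⟪g wstar, (0 : EuclideanSpace ℝ (Fin d)) - wstar⟫ ≤ ‖g wstar‖ * ‖wstar‖ := by
      have := real_inner_le_norm (g wstar) ((0 : EuclideanSpace ℝ (Fin d)) - wstar)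
      simpa [norm_sub_rev] using this
    have hnorm0 : ‖(0 : EuclideanSpace ℝ (Fin d)) - wstar‖ = ‖wstar‖ := by
      simp
    rw [hnorm0] at hs
    have hF0 : F 0 ≤ ε + ‖g wstar‖ * ‖wstar‖ + β / 2 * ‖wstar‖ ^ 2 := by linarith
    have hηT : (0:ℝ) < η * ((1:ℕ) : ℝ) := by simp [hη]
    rw [← sub_le_iff_le_add, le_div_iff₀ hηT]
    push_cast
    have p0 := mul_le_mul_of_nonneg_left hF0 hη.le
    have q1 : 2 * (η * ‖g wstar‖) * ‖wstar‖ ≤ (η * ‖g wstar‖) ^ 2 + ‖wstar‖ ^ 2 := by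
      nlinarith [sq_nonneg (η * ‖g wstar‖ - ‖wstar‖)]
    have q2 : (η * ‖g wstar‖) ^ 2 ≤ 2 * β * ε * η ^ 2 := by
      have := mul_le_mul_of_nonneg_left hgε (mul_nonneg hη.le hη.le)
      nlinarith [this]
    have q3 : 2 * β * ε * η ^ 2 ≤ η * ε := by
      have := mul_le_mul_of_nonneg_right hβη (by positivity : (0:ℝ) ≤ 2 * ε * η)
      nlinarith [this]
    have q4 : β * η * ‖wstar‖ ^ 2 ≤ ‖wstar‖ ^ 2 / 2 := by
      have := mul_le_mul_of_nonneg_right hβη (sq_nonneg ‖wstar‖)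
      nlinarith [this]
    nlinarith [p0, q1, q2, q3, q4, mul_pos hη hε]
  · -- T ≥ 2
    have hT2 : 2 ≤ T := h2
    have hm := hmain T hT
    have hTR : (2:ℝ) ≤ (T:ℝ) := by exact_mod_cast hT2
    have hd0 : (0:ℝ) ≤ ‖w T - wstar‖ ^ 2 := sq_nonneg _
    have hF0 : (0:ℝ) ≤ F (w T) := hnonneg _
    have hηT : (0:ℝ) < η * (T:ℝ) := by positivity
    rw [← sub_le_iff_le_add, le_div_iff₀ hηT]
    have p1 : 0 ≤ η * ((T:ℝ) - 2) * F (w T) :=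
      mul_nonneg (mul_nonneg hη.le (by linarith)) hF0
    nlinarith [hm, p1, hd0, mul_pos hη hε]
end

section
/- Let φ : [0,∞) → ℝ be a nonnegative, 1-Lipschitz, β-smooth, convex, strictly decreasing function with lim_{u→∞} φ(u) = 0, φ(0) ≥ 1/2 and |φ'(0)| ≥ 1/2. Define ℓ(x) = φ(x) for x ≥ 0 and ℓ(x) = φ(0) + φ'(0)·x + (β/2)x² for x < 0. Then ℓ is nonnegative, convex, β-smooth, continuously differentiable, and strictly monotonically decreasing on ℝ. -/
open Set

theorem quadratic_extension_in_class
    (β : ℝ) (hβ : 0 < β)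
    (φ φ' : ℝ → ℝ)
    (hderiv : ∀ x, 0 ≤ x → HasDerivAt φ (φ' x) x)
    (hnonneg : ∀ x, 0 ≤ x → 0 ≤ φ x)
    (hlip : ∀ x, 0 ≤ x → |φ' x| ≤ 1)
    (hsmooth : ∀ x y, 0 ≤ x → 0 ≤ y → |φ' x - φ' y| ≤ β * |x - y|)
    (hconv : ConvexOn ℝ (Set.Ici 0) φ)
    (hanti : StrictAntiOn φ (Set.Ici 0))
    (hlim : Filter.Tendsto φ Filter.atTop (nhds 0))
    (hφ0 : 1 / 2 ≤ φ 0)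
    (hφ'0 : 1 / 2 ≤ |φ' 0|)
    (ℓ : ℝ → ℝ)
    (hℓ : ∀ x, ℓ x = if 0 ≤ x then φ x else φ 0 + φ' 0 * x + β / 2 * x ^ 2) :
    (∀ x, 0 ≤ ℓ x) ∧
    ConvexOn ℝ Set.univ ℓ ∧
    StrictAnti ℓ ∧
    ∃ ℓ' : ℝ → ℝ, (∀ x, HasDerivAt ℓ (ℓ' x) x) ∧ Continuous ℓ' ∧
      (∀ x y, |ℓ' x - ℓ' y| ≤ β * |x - y|) := by
  -- derivative of the quadratic piece
  have hq : ∀ x : ℝ, HasDerivAt (fun x : ℝ => φ 0 + φ' 0 * x + β / 2 * x ^ 2)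
      (φ' 0 + β * x) x := by
    intro x
    have h1 : HasDerivAt (fun x : ℝ => φ 0 + φ' 0 * x + β / 2 * x ^ 2)
        (0 + φ' 0 * 1 + β / 2 * (↑2 * x ^ 1)) x := by
      exact ((hasDerivAt_const x (φ 0)).add ((hasDerivAt_id x).const_mul (φ' 0))).add
        ((hasDerivAt_pow 2 x).const_mul (β / 2))
    convert h1 using 1
    push_cast
    ring
  -- φ' is monotone on [0,∞)
  have hmono : ∀ x y : ℝ, 0 ≤ x → x < y → φ' x ≤ φ' y := by
    intro x y hx hxy
    have hy : (0:ℝ) ≤ y := hx.trans hxy.le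
    have h1 := hconv.le_slope_of_hasDerivAt hx hy hxy (hderiv x hx)
    have h2 := hconv.slope_le_of_hasDerivAt hx hy hxy (hderiv y hy)
    exact h1.trans h2
  -- φ' is negative on [0,∞)
  have hneg : ∀ x : ℝ, 0 ≤ x → φ' x < 0 := by
    intro x hx
    have hx1 : (0:ℝ) ≤ x + 1 := by linarith
    have h1 := hconv.le_slope_of_hasDerivAt hx hx1 (by linarith) (hderiv x hx)
    have h2 : φ (x + 1) < φ x := hanti hx hx1 (by linarith)
    rw [slope_def_field] at h1
    have h3 : (φ (x + 1) - φ x) / (x + 1 - x) < 0 := by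
      apply div_neg_of_neg_of_pos <;> linarith
    linarith
  have hφ'0neg : φ' 0 < 0 := hneg 0 le_rfl
  set l' : ℝ → ℝ := fun x => if 0 ≤ x then φ' x else φ' 0 + β * x with hl'
  -- l' monotone
  have hl'mono : Monotone l' := by
    intro x y hxy
    simp only [hl']
    by_cases hx : 0 ≤ x
    · rw [if_pos hx, if_pos (hx.trans hxy)]
      rcases eq_or_lt_of_le hxy with rfl | h
      · exact le_rfl
      · exact hmono x y hx h
    · rw [if_neg hx]
      push_neg at hx
      by_cases hy : 0 ≤ y
      · rw [if_pos hy]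
        have h1 : φ' 0 + β * x ≤ φ' 0 := by nlinarith
        have h2 : φ' 0 ≤ φ' y := by
          rcases eq_or_lt_of_le hy with rfl | h
          · exact le_rfl
          · exact hmono 0 y le_rfl h
        linarith
      · rw [if_neg hy]
        nlinarith
  -- ℓ has derivative l' everywhere
  have hld : ∀ x : ℝ, HasDerivAt ℓ (l' x) x := by
    intro x
    rcases lt_trichotomy x 0 with hx | rfl | hx
    · have hval : l' x = φ' 0 + β * x := if_neg (not_le.mpr hx)
      rw [hval]
      refine (hq x).congr_of_eventuallyEq ?_
      filter_upwards [Iio_mem_nhds hx] with y hy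
      rw [hℓ y, if_neg (not_le.mpr hy)]
    · have hval : l' 0 = φ' 0 := if_pos le_rfl
      rw [hval]
      have h1 : HasDerivWithinAt ℓ (φ' 0) (Ici 0) 0 := by
        refine ((hderiv 0 le_rfl).hasDerivWithinAt).congr ?_ ?_
        · intro y hy; rw [hℓ y, if_pos (Set.mem_Ici.mp hy)]
        · rw [hℓ 0, if_pos le_rfl]
      have h2 : HasDerivWithinAt ℓ (φ' 0) (Iic 0) 0 := by
        have h0 := ((hq 0).hasDerivWithinAt (s := Iic 0))
        rw [mul_zero, add_zero] at h0
        refine h0.congr ?_ ?_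
        · intro y hy
          rcases lt_or_eq_of_le (Set.mem_Iic.mp hy) with h | h
          · rw [hℓ y, if_neg (not_le.mpr h)]
          · subst h; rw [hℓ 0, if_pos le_rfl]; ring
        · rw [hℓ 0, if_pos le_rfl]; ring
      have h3 := h2.union h1
      rw [Iic_union_Ici, hasDerivWithinAt_univ] at h3
      exact h3
    · have hval : l' x = φ' x := if_pos hx.le
      rw [hval]
      refine ((hderiv x hx.le)).congr_of_eventuallyEq ?_
      filter_upwards [Ioi_mem_nhds hx] with y hy
      rw [hℓ y, if_pos (le_of_lt hy)]
  have hdiff : ∀ x : ℝ, DifferentiableAt ℝ ℓ x := fun x => (hld x).differentiableAt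
  have hderiv_eq : deriv ℓ = l' := funext fun x => (hld x).deriv
  have hcontℓ : Continuous ℓ := continuous_iff_continuousAt.mpr fun x => (hdiff x).continuousAt
  -- Lipschitz for l'
  have hkey : ∀ x y : ℝ, x ≤ y → |l' x - l' y| ≤ β * |x - y| := by
    intro x y hxy
    simp only [hl']
    by_cases hx : 0 ≤ x
    · rw [if_pos hx, if_pos (hx.trans hxy)]
      exact hsmooth x y hx (hx.trans hxy)
    · push_neg at hx
      rw [if_neg (not_le.mpr hx)]
      by_cases hy : 0 ≤ y
      · rw [if_pos hy]
        have h1 := hsmooth 0 y le_rfl hy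
        have h2 : |(0:ℝ) - y| = y := by rw [abs_of_nonpos (by linarith)]; ring
        rw [h2] at h1
        have h3 : (φ' 0 + β * x) - φ' y = (φ' 0 - φ' y) + β * x := by ring
        rw [h3]
        have h4 : |β * x| = β * (-x) := by
          rw [abs_of_nonpos (by nlinarith)]; ring
        have h5 : |x - y| = y - x := by rw [abs_of_nonpos (by linarith)]; ring
        calc |(φ' 0 - φ' y) + β * x| ≤ |φ' 0 - φ' y| + |β * x| := abs_add_le _ _
          _ ≤ β * y + β * (-x) := by rw [h4]; linarith
          _ = β * |x - y| := by rw [h5]; ring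
      · rw [if_neg hy]
        have : φ' 0 + β * x - (φ' 0 + β * y) = β * (x - y) := by ring
        rw [this, abs_mul, abs_of_pos hβ]
  have hl'lip : ∀ x y : ℝ, |l' x - l' y| ≤ β * |x - y| := by
    intro x y
    rcases le_total x y with h | h
    · exact hkey x y h
    · rw [abs_sub_comm, abs_sub_comm x y]
      exact hkey y x h
  have hl'cont : Continuous l' := by
    have : LipschitzWith (Real.toNNReal β) l' := by
      apply LipschitzWith.of_dist_le_mul
      intro x y
      simpa [Real.dist_eq, Real.coe_toNNReal β hβ.le] using hl'lip x y
    exact this.continuous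
  -- nonnegativity
  have hnn : ∀ x, 0 ≤ ℓ x := by
    intro x
    rw [hℓ x]
    split_ifs with hx
    · exact hnonneg x hx
    · push_neg at hx
      nlinarith [sq_nonneg x, mul_pos (neg_pos.mpr hφ'0neg) (neg_pos.mpr hx)]
  -- convexity
  have hconvl : ConvexOn ℝ Set.univ ℓ := by
    apply MonotoneOn.convexOn_of_deriv convex_univ hcontℓ.continuousOn
    · exact fun x _ => (hdiff x).differentiableWithinAt
    · rw [interior_univ, hderiv_eq]
      exact hl'mono.monotoneOn _
  -- strict antitonicity
  have hlphi : ∀ x : ℝ, 0 ≤ x → ℓ x = φ x := fun x hx => by rw [hℓ x, if_pos hx]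
  have hantiIci : StrictAntiOn ℓ (Ici 0) := by
    intro x hx y hy hxy
    rw [hlphi x hx, hlphi y hy]
    exact hanti hx hy hxy
  have hantiIic : StrictAntiOn ℓ (Iic 0) := by
    apply strictAntiOn_of_deriv_neg (convex_Iic 0) hcontℓ.continuousOn
    intro x hx
    rw [interior_Iic] at hx
    rw [hderiv_eq]
    have : l' x = φ' 0 + β * x := if_neg (not_le.mpr hx)
    rw [this]
    have : β * x < 0 := mul_neg_of_pos_of_neg hβ hx
    linarith
  have hstrict : StrictAnti ℓ := by
    intro x y hxy
    rcases le_or_gt 0 x with hx | hx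
    · exact hantiIci hx (hx.trans hxy.le) hxy
    · rcases le_or_gt y 0 with hy | hy
      · exact hantiIic (Set.mem_Iic.mpr (hxy.le.trans hy)) (Set.mem_Iic.mpr hy) hxy
      · exact lt_trans (hantiIci (Set.mem_Ici.mpr le_rfl) (Set.mem_Ici.mpr hy.le) hy)
          (hantiIic (Set.mem_Iic.mpr hx.le) (Set.mem_Iic.mpr le_rfl) hx)
  exact ⟨hnn, hconvl, hstrict, l', hld, hl'cont, hl'lip⟩
end

section
/- Let D be a distribution over {z_1, z_2, z_3} with D(z_1) = (59/64)(1−1/n), D(z_2) = (5/64)(1−1/n), D(z_3) = 1/n, and let S be an i.i.d. sample of size n ≥ 35 from D and z' an independent draw. Let δ_2 be the fraction of z_2 in S. Then Pr(z' = z_3, z_3 ∉ S, and δ_2 ∈ [1/32, 1/8]) ≥ 1/(120en). -/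
open MeasureTheory Finset

lemma binom_sum_one (n : ℕ) :
    ∑ k ∈ range (n+1), (n.choose k : ℝ) * (5/64)^k * (59/64)^(n-k) = 1 := by
  have h := add_pow (5/64 : ℝ) (59/64) n
  norm_num at h
  rw [h]
  exact Finset.sum_congr rfl fun k _ => by ring

lemma binom_var (n : ℕ) :
    ∑ k ∈ range (n+1), ((n:ℝ) * (5/64) - k)^2 * ((n.choose k : ℝ) * (5/64)^k * (59/64)^(n-k))
      = (n:ℝ) * (5/64) * (59/64) := by
  have h := congrArg (Polynomial.eval (5/64 : ℝ)) (bernsteinPolynomial.variance ℝ n)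
  simp only [Polynomial.eval_finset_sum, Polynomial.eval_mul, Polynomial.eval_pow,
    Polynomial.eval_sub, Polynomial.eval_natCast, Polynomial.eval_smul, Polynomial.eval_X,
    Polynomial.eval_one, bernsteinPolynomial, Polynomial.eval_mul, nsmul_eq_mul] at h
  norm_num at h
  rw [← h]

lemma binom_tail (n : ℕ) (hn : 35 ≤ n) (cond : ℕ → Prop) [DecidablePred cond]
    (hcond : ∀ k, ¬ cond k → (k:ℝ)/n < 1/32 ∨ 1/8 < (k:ℝ)/n) :
    (4:ℝ)/63 ≤ ∑ k ∈ range (n+1),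
      (if cond k then (n.choose k : ℝ) * (5/64)^k * (59/64)^(n-k) else 0) := by
  set f : ℕ → ℝ := fun k => (n.choose k : ℝ) * (5/64)^k * (59/64)^(n-k) with hf
  have hnpos : (0:ℝ) < n := by positivity
  have hfnn : ∀ k, 0 ≤ f k := fun k => by positivity
  have hsplit : (∑ k ∈ range (n+1), (if cond k then f k else 0))
      + (∑ k ∈ range (n+1), (if cond k then 0 else f k)) = 1 := by
    rw [← Finset.sum_add_distrib, ← binom_sum_one n]
    exact Finset.sum_congr rfl fun k _ => by split <;> simp [hf]
  have hO : (∑ k ∈ range (n+1), (if cond k then 0 else f k)) ≤ 59/63 := by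
    have step : ∀ k ∈ range (n+1), (if cond k then 0 else f k)
        ≤ ((n:ℝ)*(5/64) - k)^2 * f k / ((3*n/64)^2) := by
      intro k _
      split
      · positivity
      · rename_i hc
        have hdist : (3*(n:ℝ)/64)^2 ≤ ((n:ℝ)*(5/64) - k)^2 := by
          rcases hcond k hc with h | h
          · have : (k:ℝ) < n/32 := by
              rw [div_lt_iff₀ hnpos] at h; linarith
            nlinarith
          · have : (n:ℝ)/8 < k := by
              rw [lt_div_iff₀ hnpos] at h; linarith
            nlinarith
        have h9 : (0:ℝ) < (3*n/64)^2 := by positivity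
        rw [le_div_iff₀ h9]
        nlinarith [hfnn k]
    calc (∑ k ∈ range (n+1), (if cond k then 0 else f k))
        ≤ ∑ k ∈ range (n+1), ((n:ℝ)*(5/64) - k)^2 * f k / ((3*n/64)^2) :=
          Finset.sum_le_sum step
      _ = (∑ k ∈ range (n+1), ((n:ℝ)*(5/64) - k)^2 * f k) / ((3*n/64)^2) := by
          rw [Finset.sum_div]
      _ = ((n:ℝ) * (5/64) * (59/64)) / ((3*n/64)^2) := by rw [binom_var n]
      _ = 295/(9*n) := by field_simp; ring
      _ ≤ 59/63 := by
          rw [div_le_div_iff₀ (by positivity) (by norm_num)]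
          have : (35:ℝ) ≤ n := by exact_mod_cast hn
          nlinarith
  linarith

lemma pow_one_sub_inv (n : ℕ) (hn : 35 ≤ n) :
    (34/35 : ℝ) * (Real.exp 1)⁻¹ ≤ (1 - 1/(n:ℝ))^n := by
  have hn1 : 1 ≤ n := by omega
  have hnpos : (0:ℝ) < n := by positivity
  have hn35 : (35:ℝ) ≤ n := by exact_mod_cast hn
  have hm : (n:ℝ) - 1 = ((n-1 : ℕ) : ℝ) := by
    push_cast [Nat.cast_sub hn1]; ring
  have hkey : Real.exp (-(1/((n:ℝ)-1))) ≤ 1 - 1/(n:ℝ) := by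
    have h1 : 1 + 1/((n:ℝ)-1) ≤ Real.exp (1/((n:ℝ)-1)) := by
      have := Real.add_one_le_exp (1/((n:ℝ)-1)); linarith
    have hn1' : (1:ℝ) < n := by linarith
    have hp : (0:ℝ) < 1 + 1/((n:ℝ)-1) := by
      have : (0:ℝ) < 1/((n:ℝ)-1) := one_div_pos.mpr (by linarith)
      linarith
    rw [Real.exp_neg]
    have h2 : (Real.exp (1/((n:ℝ)-1)))⁻¹ ≤ (1 + 1/((n:ℝ)-1))⁻¹ :=
      inv_anti₀ hp h1
    have hne : ((n:ℝ) - 1) ≠ 0 := by linarith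
    have hne2 : (n:ℝ) ≠ 0 := by linarith
    have h3 : (1 + 1/((n:ℝ)-1))⁻¹ = 1 - 1/(n:ℝ) := by
      rw [show (1:ℝ) + 1/((n:ℝ)-1) = (n:ℝ)/((n:ℝ)-1) by field_simp; ring,
        one_div, inv_div]
      field_simp
    linarith
  have hbase : (0:ℝ) ≤ Real.exp (-(1/((n:ℝ)-1))) := (Real.exp_pos _).le
  have hpow : Real.exp (-(1/((n:ℝ)-1)))^(n-1) ≤ (1 - 1/(n:ℝ))^(n-1) :=
    pow_le_pow_left₀ hbase hkey (n-1)
  have hexp : Real.exp (-(1/((n:ℝ)-1)))^(n-1) = Real.exp (-1) := by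
    rw [← Real.exp_nat_mul, hm]
    congr 1
    rw [← hm]
    have hne : ((n:ℝ) - 1) ≠ 0 := by linarith
    field_simp
  have hsplit : (1 - 1/(n:ℝ))^n = (1 - 1/(n:ℝ))^(n-1) * (1 - 1/(n:ℝ)) := by
    rw [← pow_succ]
    congr 1
    omega
  have hlast : (34/35 : ℝ) ≤ 1 - 1/(n:ℝ) := by
    have h1n : 1/(n:ℝ) ≤ 1/35 := by
      apply div_le_div_of_nonneg_left (by norm_num) (by norm_num) hn35
    linarith
  have h0 : (0:ℝ) ≤ (1 - 1/(n:ℝ))^(n-1) := by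
    apply pow_nonneg; linarith
  rw [hsplit]
  calc (34/35 : ℝ) * (Real.exp 1)⁻¹ = Real.exp (-1) * (34/35) := by
        rw [Real.exp_neg]; ring
    _ ≤ (1 - 1/(n:ℝ))^(n-1) * (1 - 1/(n:ℝ)) := by
        apply mul_le_mul _ hlast (by norm_num) h0
        rw [← hexp]; exact hpow

theorem prob_good_event_lower_bound (n : ℕ) (hn : 35 ≤ n)
    (D : Measure (Fin 3)) [IsProbabilityMeasure D]
    (h1 : D {0} = ENNReal.ofReal ((59 / 64) * (1 - 1 / (n : ℝ))))
    (h2 : D {1} = ENNReal.ofReal ((5 / 64) * (1 - 1 / (n : ℝ))))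
    (h3 : D {2} = ENNReal.ofReal (1 / (n : ℝ))) :
    ENNReal.ofReal (1 / (120 * Real.exp 1 * n)) ≤
      ((Measure.pi fun _ : Fin n => D).prod D)
        {p : (Fin n → Fin 3) × Fin 3 | p.2 = 2 ∧ (∀ i, p.1 i ≠ 2) ∧
          (1 / 32 : ℝ) ≤ ((Finset.univ.filter fun i => p.1 i = 1).card : ℝ) / n ∧
          ((Finset.univ.filter fun i => p.1 i = 1).card : ℝ) / n ≤ 1 / 8} := by
  classical
  have hnpos : 0 < n := by omega
  have hnR : (0:ℝ) < n := by positivity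
  have h1n : (1:ℝ)/n ≤ 1/35 := by
    apply div_le_div_of_nonneg_left (by norm_num) (by norm_num)
    exact_mod_cast hn
  have hq0 : (0:ℝ) ≤ 1 - 1/(n:ℝ) := by linarith
  set a : ℝ := (59/64) * (1 - 1/(n:ℝ)) with ha_def
  set b : ℝ := (5/64) * (1 - 1/(n:ℝ)) with hb_def
  have ha : 0 ≤ a := by positivity
  have hb : 0 ≤ b := by positivity
  set cnt : (Fin n → Fin 3) → ℕ :=
    fun s => (Finset.univ.filter fun i => s i = 1).card with hcnt_def
  set cond : ℕ → Prop := fun k => (1/32:ℝ) ≤ (k:ℝ)/n ∧ (k:ℝ)/n ≤ 1/8 with hcond_def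
  set F : Finset (Fin n → Fin 3) :=
    univ.filter (fun s => (∀ i, s i ≠ 2) ∧ cond (cnt s)) with hF_def
  -- rewrite the event set as a product
  have hset : {p : (Fin n → Fin 3) × Fin 3 | p.2 = 2 ∧ (∀ i, p.1 i ≠ 2) ∧
          (1 / 32 : ℝ) ≤ ((Finset.univ.filter fun i => p.1 i = 1).card : ℝ) / n ∧
          ((Finset.univ.filter fun i => p.1 i = 1).card : ℝ) / n ≤ 1 / 8}
      = (↑F : Set (Fin n → Fin 3)) ×ˢ ({2} : Set (Fin 3)) := by
    ext ⟨s, z⟩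
    simp only [Set.mem_setOf_eq, Set.mem_prod, Set.mem_singleton_iff, Finset.coe_filter,
      Set.mem_setOf_eq, mem_univ, true_and, hF_def, hcond_def, hcnt_def]
    tauto
  rw [hset, Measure.prod_prod, h3]
  -- measure of F
  have hsingle : ∀ f ∈ F, (Measure.pi fun _ : Fin n => D) {f}
      = ENNReal.ofReal (b ^ (cnt f) * a ^ (n - cnt f)) := by
    intro f hf
    have hf2 : ∀ i, f i ≠ 2 := (Finset.mem_filter.1 hf).2.1
    rw [← Set.univ_pi_singleton f, Measure.pi_pi]
    have hval : ∀ i, D {f i} = ENNReal.ofReal (if f i = 1 then b else a) := by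
      intro i
      have hx : f i = 0 ∨ f i = 1 := by
        have : ∀ x : Fin 3, x ≠ 2 → x = 0 ∨ x = 1 := by decide
        exact this _ (hf2 i)
      rcases hx with hx | hx <;> rw [hx] <;> norm_num [h1, h2]
    calc ∏ i, D {f i} = ∏ i : Fin n, ENNReal.ofReal (if f i = 1 then b else a) := by
          exact Finset.prod_congr rfl fun i _ => hval i
      _ = ENNReal.ofReal (∏ i : Fin n, (if f i = 1 then b else a)) := by
          rw [ENNReal.ofReal_prod_of_nonneg]
          intro i _
          split <;> assumption
      _ = ENNReal.ofReal (b ^ (cnt f) * a ^ (n - cnt f)) := by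
          congr 1
          rw [← Finset.prod_filter_mul_prod_filter_not univ (fun i => f i = 1)]
          have e1 : ∏ i ∈ univ.filter (fun i => f i = 1), (if f i = 1 then b else a)
              = b ^ cnt f := by
            rw [Finset.prod_congr rfl (fun i hi => if_pos (Finset.mem_filter.1 hi).2),
              Finset.prod_const, hcnt_def]
          have hcard : (univ.filter (fun i => ¬ f i = 1)).card = n - cnt f := by
            have h' : cnt f + (univ.filter (fun i => ¬ f i = 1)).card = n := by
              rw [hcnt_def]
              have := Finset.card_filter_add_card_filter_not
                (s := (univ : Finset (Fin n))) (p := fun i => f i = 1)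
              simpa using this
            omega
          have e2 : ∏ i ∈ univ.filter (fun i => ¬ f i = 1), (if f i = 1 then b else a)
              = a ^ (n - cnt f) := by
            rw [Finset.prod_congr rfl (fun i hi => if_neg (Finset.mem_filter.1 hi).2),
              Finset.prod_const, hcard]
          rw [e1, e2]
  have hμF : (Measure.pi fun _ : Fin n => D) ↑F
      = ENNReal.ofReal (∑ f ∈ F, b ^ (cnt f) * a ^ (n - cnt f)) := by
    have hcoe : (↑F : Set (Fin n → Fin 3)) = ⋃ f ∈ F, {f} := by ext x; simp
    rw [hcoe, measure_biUnion_finset ?_ (fun f _ => measurableSet_singleton f)]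
    · rw [ENNReal.ofReal_sum_of_nonneg (fun f _ => by positivity)]
      exact Finset.sum_congr rfl hsingle
    · intro x _ y _ hxy
      exact Set.disjoint_singleton.mpr hxy
  rw [hμF, ← ENNReal.ofReal_mul (by positivity)]
  apply ENNReal.ofReal_le_ofReal
  -- now a real inequality
  set S : ℝ := ∑ f ∈ F, b ^ (cnt f) * a ^ (n - cnt f) with hS_def
  -- lower bound S
  set e' : Finset (Fin n) → (Fin n → Fin 3) :=
    fun T i => if i ∈ T then 1 else 0 with he'_def
  have hinj : Function.Injective e' := by
    intro T T' h
    ext i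
    have := congrFun h i
    by_cases hi : i ∈ T <;> by_cases hi' : i ∈ T' <;>
      simp [he'_def, hi, hi'] at this ⊢ <;> tauto
  have hcnte : ∀ T : Finset (Fin n), cnt (e' T) = T.card := by
    intro T
    have hTe : (univ.filter fun i => e' T i = 1) = T := by
      ext i
      by_cases hi : i ∈ T <;> simp [he'_def, hi]
    rw [hcnt_def]
    simp only [hTe]
  set P : Finset (Finset (Fin n)) :=
    univ.powerset.filter (fun T => cond T.card) with hP_def
  have himg : P.image e' ⊆ F := by
    intro f hf
    rcases Finset.mem_image.1 hf with ⟨T, hT, rfl⟩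
    rw [hF_def, Finset.mem_filter]
    refine ⟨Finset.mem_univ _, fun i => ?_, ?_⟩
    · by_cases hi : i ∈ T <;> simp [he'_def, hi]
    · rw [hcnte]
      exact (Finset.mem_filter.1 hT).2
  have hstep1 : ∑ f ∈ P.image e', b ^ (cnt f) * a ^ (n - cnt f) ≤ S :=
    Finset.sum_le_sum_of_subset_of_nonneg himg (fun f _ _ => by positivity)
  have hstep2 : ∑ f ∈ P.image e', b ^ (cnt f) * a ^ (n - cnt f)
      = ∑ m ∈ range (n+1),
        (if cond m then (n.choose m : ℝ) * ((5/64)^m * (59/64)^(n-m)) * (1-1/(n:ℝ))^n else 0) := by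
    rw [Finset.sum_image (fun x _ y _ h => hinj h)]
    have : ∀ T : Finset (Fin n), b ^ (cnt (e' T)) * a ^ (n - cnt (e' T))
        = b ^ T.card * a ^ (n - T.card) := fun T => by rw [hcnte]
    rw [Finset.sum_congr rfl fun T _ => this T]
    rw [hP_def, Finset.sum_filter]
    rw [Finset.sum_powerset_apply_card (fun m => if cond m then b ^ m * a ^ (n-m) else 0)]
    simp only [Finset.card_univ, Fintype.card_fin]
    refine Finset.sum_congr rfl fun m hm => ?_
    have hm' : m ≤ n := by
      rw [Finset.mem_range] at hm; omega
    have hqpow : b ^ m * a ^ (n-m)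
        = (5/64:ℝ)^m * (59/64)^(n-m) * (1-1/(n:ℝ))^n := by
      rw [hb_def, ha_def, mul_pow, mul_pow,
        show (5/64:ℝ)^m * (1-1/(n:ℝ))^m * ((59/64:ℝ)^(n-m) * (1-1/(n:ℝ))^(n-m))
          = (5/64:ℝ)^m * (59/64)^(n-m) * ((1-1/(n:ℝ))^m * (1-1/(n:ℝ))^(n-m)) by ring,
        ← pow_add, show m + (n - m) = n by omega]
    rw [smul_ite]
    split
    · rw [hqpow, nsmul_eq_mul]; ring
    · simp
  have hstep3 : ∑ m ∈ range (n+1),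
        (if cond m then (n.choose m : ℝ) * ((5/64)^m * (59/64)^(n-m)) * (1-1/(n:ℝ))^n else 0)
      = (∑ m ∈ range (n+1),
          (if cond m then (n.choose m : ℝ) * (5/64)^m * (59/64)^(n-m) else 0)) * (1-1/(n:ℝ))^n := by
    rw [Finset.sum_mul]
    exact Finset.sum_congr rfl fun m _ => by split <;> [skip; simp] <;> ring
  have hT : (4:ℝ)/63 ≤ ∑ m ∈ range (n+1),
      (if cond m then (n.choose m : ℝ) * (5/64)^m * (59/64)^(n-m) else 0) := by
    apply binom_tail n hn cond
    intro k hk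
    rw [hcond_def, not_and_or] at hk
    rcases hk with hk | hk
    · left; exact lt_of_not_ge hk
    · right; exact lt_of_not_ge hk
  have hQ : (34/35 : ℝ) * (Real.exp 1)⁻¹ ≤ (1 - 1/(n:ℝ))^n := pow_one_sub_inv n hn
  have hepos : (0:ℝ) < Real.exp 1 := Real.exp_pos 1
  have hSlb : (4:ℝ)/63 * ((34/35) * (Real.exp 1)⁻¹) ≤ S := by
    calc (4:ℝ)/63 * ((34/35) * (Real.exp 1)⁻¹)
        ≤ (∑ m ∈ range (n+1),
            (if cond m then (n.choose m : ℝ) * (5/64)^m * (59/64)^(n-m) else 0))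
          * (1 - 1/(n:ℝ))^n := by
          apply mul_le_mul hT hQ (by positivity) (le_trans (by norm_num) hT)
      _ = ∑ m ∈ range (n+1),
            (if cond m then (n.choose m : ℝ) * ((5/64)^m * (59/64)^(n-m)) * (1-1/(n:ℝ))^n else 0) :=
          hstep3.symm
      _ = ∑ f ∈ P.image e', b ^ (cnt f) * a ^ (n - cnt f) := hstep2.symm
      _ ≤ S := hstep1
  calc 1 / (120 * Real.exp 1 * n) = (1/120) * (Real.exp 1)⁻¹ * (1/n) := by
        field_simp
    _ ≤ ((4:ℝ)/63 * ((34/35) * (Real.exp 1)⁻¹)) * (1/n) := by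
        apply mul_le_mul_of_nonneg_right _ (by positivity)
        have hi : (0:ℝ) ≤ (Real.exp 1)⁻¹ := by positivity
        nlinarith
    _ ≤ S * (1/n) := mul_le_mul_of_nonneg_right hSlb (by positivity)
end

section
/- Let ℓ_1, …, ℓ_n : ℝ^d → ℝ be convex, nonnegative, differentiable, and β-smooth, and suppose w* satisfies ℓ_i(w*) ≤ ε for all i. Run SGD with replacement with w_1 = 0 and η ≤ 1/β. Then for every realization of the indices, the average iterate w̄_T = (1/T) Σ_{t=1}^T w_t satisfies ‖w̄_T‖ ≤ 2‖w*‖ + 2√(ηεT). -/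
open Filter Set Topology

variable {F : Type*} [NormedAddCommGroup F] [InnerProductSpace ℝ F] [CompleteSpace F]

lemma curve_deriv (f : F → ℝ) (gx : F) (x v : F) (h : HasGradientAt f gx x) :
    HasDerivAt (fun t : ℝ => f (x + t • v)) (inner ℝ gx v : ℝ) 0 := by
  have hF := h.hasFDerivAt
  have hc : HasDerivAt (fun t : ℝ => x + t • v) v 0 := by
    simpa using ((hasDerivAt_id (0:ℝ)).smul_const v).const_add x
  have hF' : HasFDerivAt f ((InnerProductSpace.toDual ℝ F) gx) (x + (0:ℝ) • v) := by
    simpa using hF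
  have := hF'.comp_hasDerivAt (x := (0:ℝ)) hc
  have h' := this; simp at h'; exact h'

lemma convex_first_order (f : F → ℝ) (gf : F) (x y : F)
    (hconv : ConvexOn ℝ Set.univ f) (h : HasGradientAt f gf x) :
    f x + inner ℝ gf (y - x) ≤ f y := by
  have hd := curve_deriv f gf x (y - x) h
  have hslope : Tendsto (slope (fun t : ℝ => f (x + t • (y - x))) 0) (𝓝[>] 0)
      (𝓝 (inner ℝ gf (y - x) : ℝ)) := by
    have := hasDerivAt_iff_tendsto_slope.mp hd
    exact this.mono_left (nhdsWithin_mono _ (by intro t ht; simp at ht ⊢; linarith [ht]))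
  have hub : ∀ᶠ t in 𝓝[>] (0:ℝ), slope (fun t : ℝ => f (x + t • (y - x))) 0 t ≤ f y - f x := by
    filter_upwards [Ioo_mem_nhdsGT_of_mem (by norm_num : (0:ℝ) ∈ Ico (0:ℝ) 1)] with t ht
    obtain ⟨ht0, ht1⟩ := ht
    have hcvx := hconv.2 (mem_univ x) (mem_univ y) (by linarith : (0:ℝ) ≤ 1 - t)
      (le_of_lt ht0) (by ring)
    have hxy : x + t • (y - x) = (1 - t) • x + t • y := by
      simp [smul_sub, sub_smul]; abel
    have h2 : f (x + t • (y - x)) ≤ (1 - t) * f x + t * f y := by rw [hxy]; simpa using hcvx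
    simp only [slope_def_field, div_eq_iff, sub_zero]
    rw [div_le_iff₀ ht0]
    simp only [zero_smul, add_zero]
    nlinarith
  have := le_of_tendsto hslope hub
  linarith


lemma descent_lemma (f : F → ℝ) (g : F → F) (β : ℝ) (hβ : 0 < β)
    (hgrad : ∀ u, HasGradientAt f (g u) u)
    (hlip : ∀ u v, ‖g u - g v‖ ≤ β * ‖u - v‖) (x y : F) :
    f y ≤ f x + inner ℝ (g x) (y - x) + β / 2 * ‖y - x‖ ^ 2 := by
  set v := y - x with hv
  set ψ : ℝ → ℝ := fun t => f (x + t • v) - t * inner ℝ (g x) v - β * t ^ 2 / 2 * ‖v‖ ^ 2 with hψ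
  have hψd : ∀ t : ℝ, HasDerivAt ψ
      ((inner ℝ (g (x + t • v)) v : ℝ) - inner ℝ (g x) v - β * t * ‖v‖ ^ 2) t := by
    intro t
    have hc : HasDerivAt (fun s : ℝ => x + s • v) v t := by
      simpa using ((hasDerivAt_id t).smul_const v).const_add x
    have hF : HasFDerivAt f ((InnerProductSpace.toDual ℝ F) (g (x + t • v))) (x + t • v) :=
      (hgrad _).hasFDerivAt
    have h1 : HasDerivAt (fun s : ℝ => f (x + s • v)) (inner ℝ (g (x + t • v)) v : ℝ) t := by
      have h' := hF.comp_hasDerivAt t hc; simp at h'; exact h'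
    have h2 : HasDerivAt (fun s : ℝ => s * (inner ℝ (g x) v : ℝ)) (inner ℝ (g x) v : ℝ) t := by
      simpa using (hasDerivAt_id t).mul_const (inner ℝ (g x) v : ℝ)
    have h3 : HasDerivAt (fun s : ℝ => β * s ^ 2 / 2 * ‖v‖ ^ 2) (β * t * ‖v‖ ^ 2) t := by
      have : HasDerivAt (fun s : ℝ => s ^ 2) (2 * t) t := by
        simpa using hasDerivAt_pow 2 t
      have := ((this.const_mul β).div_const 2).mul_const (‖v‖ ^ 2)
      rw [show β * t * ‖v‖ ^ 2 = β * (2 * t) / 2 * ‖v‖ ^ 2 by ring]; exact this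
    exact (h1.sub h2).sub h3
  have hmono : ψ 1 ≤ ψ 0 := by
    have : AntitoneOn ψ (Icc 0 1) := by
      apply antitoneOn_of_deriv_nonpos (convex_Icc 0 1)
      · exact Continuous.continuousOn (continuous_iff_continuousAt.mpr
          fun t => (hψd t).continuousAt)
      · intro t _
        exact (hψd t).differentiableAt.differentiableWithinAt
      · intro t ht
        rw [interior_Icc] at ht
        rw [(hψd t).deriv]
        have key : (inner ℝ (g (x + t • v)) v : ℝ) - inner ℝ (g x) v ≤ β * t * ‖v‖ ^ 2 := by
          have h1 : (inner ℝ (g (x + t • v)) v : ℝ) - inner ℝ (g x) v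
              = inner ℝ (g (x + t • v) - g x) v := by rw [inner_sub_left]
          rw [h1]
          calc (inner ℝ (g (x + t • v) - g x) v : ℝ) ≤ ‖g (x + t • v) - g x‖ * ‖v‖ :=
                real_inner_le_norm _ _
            _ ≤ (β * ‖(x + t • v) - x‖) * ‖v‖ := by
                gcongr; exact hlip _ _
            _ = β * (|t| * ‖v‖) * ‖v‖ := by rw [add_sub_cancel_left, norm_smul]; simp
            _ = β * t * ‖v‖ ^ 2 := by rw [abs_of_pos ht.1]; ring
        linarith
    exact this (by simp) (by simp) (by norm_num)
  have h0 : ψ 0 = f x := by simp [hψ]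
  have h1 : ψ 1 = f y - inner ℝ (g x) v - β / 2 * ‖v‖ ^ 2 := by
    simp only [hψ, one_smul, one_pow, one_mul, mul_one]
    rw [show x + v = y by rw [hv]; abel]
  rw [h0, h1] at hmono
  linarith

lemma self_bounding (f : F → ℝ) (g : F → F) (β : ℝ) (hβ : 0 < β)
    (hnonneg : ∀ u, 0 ≤ f u)
    (hgrad : ∀ u, HasGradientAt f (g u) u)
    (hlip : ∀ u v, ‖g u - g v‖ ≤ β * ‖u - v‖) (x : F) :
    ‖g x‖ ^ 2 ≤ 2 * β * f x := by
  have hd := descent_lemma f g β hβ hgrad hlip x (x - (1 / β) • g x)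
  have h1 : (inner ℝ (g x) ((x - (1 / β) • g x) - x) : ℝ) = -(1 / β) * ‖g x‖ ^ 2 := by
    simp [inner_smul_right, real_inner_self_eq_norm_sq]
  have h2 : ‖(x - (1 / β) • g x) - x‖ ^ 2 = (1 / β) ^ 2 * ‖g x‖ ^ 2 := by
    rw [sub_sub_cancel_left, norm_neg, norm_smul]
    rw [Real.norm_eq_abs, abs_of_pos (by positivity : (0:ℝ) < 1/β)]
    try ring
  rw [h1, h2] at hd
  have h3 := hnonneg (x - (1 / β) • g x)
  have hβ' : β ≠ 0 := ne_of_gt hβ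
  have key : f x + -(1 / β) * ‖g x‖ ^ 2 + β / 2 * ((1 / β) ^ 2 * ‖g x‖ ^ 2)
      = f x - 1 / (2 * β) * ‖g x‖ ^ 2 := by
    field_simp
    ring
  rw [key] at hd
  have h4 : 0 ≤ f x - 1 / (2 * β) * ‖g x‖ ^ 2 := le_trans h3 hd
  have h5 : 0 < 1 / (2 * β) := by positivity
  have h6 : 1 / (2 * β) * ‖g x‖ ^ 2 ≤ f x := by linarith
  calc ‖g x‖ ^ 2 = 2 * β * (1 / (2 * β) * ‖g x‖ ^ 2) := by field_simp
    _ ≤ 2 * β * f x := by gcongr <;> positivity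

set_option maxHeartbeats 1600000 in
theorem sgd_average_iterate_norm_bound {d n : ℕ}
    (ℓ : Fin n → EuclideanSpace ℝ (Fin d) → ℝ)
    (g : Fin n → EuclideanSpace ℝ (Fin d) → EuclideanSpace ℝ (Fin d))
    (β η ε : ℝ) (hβ : 0 < β) (hη : 0 < η) (hηβ : η ≤ 1 / β) (hε : 0 < ε)
    (hconv : ∀ i, ConvexOn ℝ Set.univ (ℓ i))
    (hnonneg : ∀ i w, 0 ≤ ℓ i w)
    (hgrad : ∀ i w, HasGradientAt (ℓ i) (g i w) w)
    (hlip : ∀ i u v, ‖g i u - g i v‖ ≤ β * ‖u - v‖)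
    (wstar : EuclideanSpace ℝ (Fin d)) (hstar : ∀ i, ℓ i wstar ≤ ε)
    (idx : ℕ → Fin n)
    (w : ℕ → EuclideanSpace ℝ (Fin d))
    (hw1 : w 1 = 0)
    (hupd : ∀ t, 1 ≤ t → w (t + 1) = w t - η • g (idx t) (w t)) :
    ∀ T : ℕ, 1 ≤ T →
      ‖(1 / (T : ℝ)) • ∑ t ∈ Finset.Icc 1 T, w t‖ ≤
        2 * ‖wstar‖ + 2 * Real.sqrt (η * ε * T) := by
  have hηβ1 : η * β ≤ 1 := by
    rw [le_div_iff₀ hβ] at hηβ; linarith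
  -- one step recursion
  have step : ∀ t, 1 ≤ t → ‖w (t + 1) - wstar‖ ^ 2 ≤ ‖w t - wstar‖ ^ 2 + 2 * η * ε := by
    intro t ht
    set i := idx t
    set v := g i (w t) with hv
    have hexp : w (t + 1) - wstar = (w t - wstar) - η • v := by
      rw [hupd t ht]; abel
    rw [hexp, norm_sub_sq_real]
    have hinner : (inner ℝ (w t - wstar) (η • v) : ℝ) = η * inner ℝ v (w t - wstar) := by
      rw [real_inner_smul_right, real_inner_comm]
    have hnv : ‖η • v‖ ^ 2 = η ^ 2 * ‖v‖ ^ 2 := by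
      rw [norm_smul, Real.norm_eq_abs, abs_of_pos hη, mul_pow]
    have hfo := convex_first_order (ℓ i) v (w t) wstar (hconv i) (hgrad i (w t))
    have hsb := self_bounding (ℓ i) (g i) β hβ (hnonneg i) (hgrad i) (hlip i) (w t)
    rw [← hv] at hsb
    have hstar' := hstar i
    have hL := hnonneg i (w t)
    have hiv : (inner ℝ v (wstar - w t) : ℝ) = - inner ℝ v (w t - wstar) := by
      rw [← inner_neg_right]; congr 1; abel
    rw [hiv] at hfo
    rw [hinner, hnv]
    have hA : η ^ 2 * ‖v‖ ^ 2 ≤ 2 * η * ℓ i (w t) := by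
      have h1 : η ^ 2 * ‖v‖ ^ 2 ≤ η ^ 2 * (2 * β * ℓ i (w t)) := by nlinarith [sq_nonneg η]
      have h2 : η ^ 2 * (2 * β * ℓ i (w t)) ≤ 2 * η * ℓ i (w t) := by
        have : 2 * η * ℓ i (w t) * (η * β) ≤ 2 * η * ℓ i (w t) * 1 := by
          have : 0 ≤ 2 * η * ℓ i (w t) := by positivity
          nlinarith
        nlinarith
      linarith
    have hB2 : ℓ i (w t) - ε ≤ (inner ℝ v (w t - wstar) : ℝ) := by linarith
    nlinarith [mul_le_mul_of_nonneg_left hB2 (by linarith : (0:ℝ) ≤ 2 * η)]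
  -- iterate bound
  intro T hT
  have iter : ∀ t, 1 ≤ t → ‖w t - wstar‖ ^ 2 ≤ ‖wstar‖ ^ 2 + 2 * η * ε * ((t : ℝ) - 1) := by
    intro t ht
    induction t with
    | zero => omega
    | succ s ih =>
      rcases Nat.eq_or_lt_of_le ht with h1 | h1
      · rw [← h1]
        simp [hw1]
      · have hs : 1 ≤ s := by omega
        have := step s hs
        have := ih hs
        push_cast
        have hss : (1:ℝ) ≤ (s:ℝ) := by exact_mod_cast hs
        nlinarith [mul_pos hη hε]
  -- pointwise norm bound
  have hsq : Real.sqrt (η * ε * T) ^ 2 = η * ε * T := by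
    rw [Real.sq_sqrt]; positivity
  have hsqrt_nonneg : 0 ≤ Real.sqrt (η * ε * T) := Real.sqrt_nonneg _
  have ptwise : ∀ t ∈ Finset.Icc 1 T, ‖w t‖ ≤ 2 * ‖wstar‖ + 2 * Real.sqrt (η * ε * T) := by
    intro t htmem
    rw [Finset.mem_Icc] at htmem
    have h1 := iter t htmem.1
    have htT : ((t : ℝ) - 1) ≤ (T : ℝ) := by
      have : (t : ℝ) ≤ (T : ℝ) := by exact_mod_cast htmem.2
      linarith
    have hB : ‖w t - wstar‖ ≤ ‖wstar‖ + 2 * Real.sqrt (η * ε * T) := by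
      have hb0 : 0 ≤ ‖wstar‖ + 2 * Real.sqrt (η * ε * T) := by positivity
      have hsq2 : ‖w t - wstar‖ ^ 2 ≤ (‖wstar‖ + 2 * Real.sqrt (η * ε * T)) ^ 2 := by
        have ht1 : (0:ℝ) ≤ (t:ℝ) - 1 := by
          have : (1:ℝ) ≤ (t:ℝ) := by exact_mod_cast htmem.1
          linarith
        have hηε : (0:ℝ) ≤ η * ε := by positivity
        have h2 : η * ε * ((t:ℝ) - 1) ≤ η * ε * (T:ℝ) := by
          exact mul_le_mul_of_nonneg_left htT hηε
        have hAS : 0 ≤ ‖wstar‖ * Real.sqrt (η * ε * T) := by positivity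
        have hexpand : (‖wstar‖ + 2 * Real.sqrt (η * ε * T)) ^ 2
            = ‖wstar‖ ^ 2 + 4 * (‖wstar‖ * Real.sqrt (η * ε * T)) + 4 * (η * ε * (T:ℝ)) := by
          rw [add_sq, mul_pow, hsq]
          ring
        rw [hexpand]
        have hT0 : (0:ℝ) ≤ η * ε * (T:ℝ) := by positivity
        linarith
      calc ‖w t - wstar‖ = Real.sqrt (‖w t - wstar‖ ^ 2) := by
            rw [Real.sqrt_sq (norm_nonneg _)]
        _ ≤ Real.sqrt ((‖wstar‖ + 2 * Real.sqrt (η * ε * T)) ^ 2) := Real.sqrt_le_sqrt hsq2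
        _ = ‖wstar‖ + 2 * Real.sqrt (η * ε * T) := Real.sqrt_sq hb0
    calc ‖w t‖ = ‖(w t - wstar) + wstar‖ := by congr 1; abel
      _ ≤ ‖w t - wstar‖ + ‖wstar‖ := norm_add_le _ _
      _ ≤ 2 * ‖wstar‖ + 2 * Real.sqrt (η * ε * T) := by linarith
  -- average
  have hTpos : (0:ℝ) < T := by exact_mod_cast hT
  have hcard : (Finset.Icc 1 T).card = T := by rw [Nat.card_Icc]; omega
  calc ‖(1 / (T : ℝ)) • ∑ t ∈ Finset.Icc 1 T, w t‖
      = (1 / (T:ℝ)) * ‖∑ t ∈ Finset.Icc 1 T, w t‖ := by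
        rw [norm_smul, Real.norm_eq_abs, abs_of_pos (by positivity)]
    _ ≤ (1 / (T:ℝ)) * ∑ t ∈ Finset.Icc 1 T, ‖w t‖ := by
        gcongr; exact norm_sum_le _ _
    _ ≤ (1 / (T:ℝ)) * ∑ t ∈ Finset.Icc 1 T, (2 * ‖wstar‖ + 2 * Real.sqrt (η * ε * T)) := by
        exact mul_le_mul_of_nonneg_left (Finset.sum_le_sum ptwise) (by positivity)
    _ = 2 * ‖wstar‖ + 2 * Real.sqrt (η * ε * T) := by
        rw [Finset.sum_const, hcard, nsmul_eq_mul]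
        field_simp
end
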